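/- Let S_n(x) = Σ_k S_{n,k} x^k and T_n(x) = Σ_k T_{n,k} x^k be the type-B descent polynomials over signed permutations of {1,1,...,n,n} and of {1,1,...,n,n,n+1} (with n+1 positively signed), respectively. Then T_n(x) = (1 + 2nx) S_n(x) + x(1-x) S_n'(x). -/

import Mathlib

open Polynomial

/-- Number of descents of a word. -/
def des (l : List ℤ) : ℕ := ((l.zip l.tail).filter (fun p => p.2 < p.1)).length

/-- Type-B descents: prepend 0. -/
def desB (l : List ℤ) : ℕ := des (0 :: l)

/-- The multiset {1,1,2,2,...,n,n} as a list. -/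
def baseList (n : ℕ) : List ℤ := (List.range n).flatMap (fun i => [(i : ℤ) + 1, (i : ℤ) + 1])

/-- All distinct arrangements (multiset permutations) of a list. -/
def arrangements (l : List ℤ) : List (List ℤ) := l.permutations.dedup

/-- Descent polynomial over arrangements of `l`. -/
noncomputable def desPoly (l : List ℤ) : Polynomial ℝ :=
  ((arrangements l).map (fun w => (X : Polynomial ℝ) ^ des w)).sum

noncomputable def Ppoly (n : ℕ) : Polynomial ℝ := desPoly (baseList n)

noncomputable def Qpoly (n : ℕ) : Polynomial ℝ := desPoly (baseList n ++ [(n : ℤ) + 1])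

/-- All signings of a word. -/
def signings : List ℤ → List (List ℤ)
  | [] => [[]]
  | a :: t => (signings t).flatMap (fun w => [a :: w, (-a) :: w])

/-- All signed permutations of the multiset given by `l`. -/
def signedWords (l : List ℤ) : List (List ℤ) := (arrangements l).flatMap signings

noncomputable def SpolyB (n : ℕ) : Polynomial ℝ :=
  ((signedWords (baseList n)).map (fun w => (X : Polynomial ℝ) ^ desB w)).sum

/-- Signed permutations of {1,1,...,n,n,n+1} in which n+1 carries a plus sign. -/
def Dwords (n : ℕ) : List (List ℤ) :=
  (signedWords (baseList n ++ [(n : ℤ) + 1])).filter (fun w => ((n : ℤ) + 1) ∈ w)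

noncomputable def TpolyB (n : ℕ) : Polynomial ℝ :=
  ((Dwords n).map (fun w => (X : Polynomial ℝ) ^ desB w)).sum

def PcountZ (n : ℕ) (k : ℤ) : ℕ :=
  ((arrangements (baseList n)).filter (fun w => (des w : ℤ) = k)).length

def QcountN (n : ℕ) (k : ℕ) : ℕ :=
  ((arrangements (baseList n ++ [(n : ℤ) + 1])).filter (fun w => des w = k)).length

def ScountZ (n : ℕ) (k : ℤ) : ℕ :=
  ((signedWords (baseList n)).filter (fun w => (desB w : ℤ) = k)).length

def TcountZ (n : ℕ) (k : ℤ) : ℕ :=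
  ((Dwords n).filter (fun w => (desB w : ℤ) = k)).length

open List

/-! ### Auxiliary lemmas -/

section Aux

lemma aux_des_single (c : ℤ) : des [c] = 0 := by simp [des]

lemma aux_des_cons_cons (x y : ℤ) (r : List ℤ) :
    des (x :: y :: r) = (if y < x then 1 else 0) + des (y :: r) := by
  simp only [des, List.zip, List.tail, List.zipWith, List.filter_cons]
  split <;> simp_all [Nat.add_comm]

/-- Key analytic lemma: summing `X ^ des` over all insertions of a strictly
maximal element. -/
lemma aux_insSum (b : ℤ) : ∀ (w : List ℤ) (c : ℤ), c < b → (∀ x ∈ w, x < b) →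
    ((List.range (w.length + 1)).map
      (fun i => (X : Polynomial ℝ) ^ des (c :: w.insertIdx i b))).sum
    = ((des (c :: w) : Polynomial ℝ) + 1
        + ((w.length : Polynomial ℝ) - (des (c :: w) : Polynomial ℝ)) * X) * X ^ des (c :: w)
  | [], c, hc, _ => by
      simp [List.range_succ, aux_des_single, aux_des_cons_cons, hc.not_gt, List.insertIdx_zero]
  | a :: t, c, hc, hw => by
      have ha : a < b := hw a (by simp)
      have ht : ∀ x ∈ t, x < b := fun x hx => hw x (by simp [hx])
      have IH := aux_insSum b t a ha ht
      rw [List.range_succ_eq_map]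
      simp only [List.map_cons, List.map_map, List.sum_cons, Function.comp_def,
        List.insertIdx_zero, List.insertIdx_succ_cons, List.length_cons]
      have e1 : des (c :: b :: a :: t) = des (a :: t) + 1 := by
        rw [aux_des_cons_cons, aux_des_cons_cons]
        simp [hc.not_gt, ha, Nat.add_comm]
      have e2 : ∀ j, des (c :: a :: t.insertIdx j b)
          = (if a < c then 1 else 0) + des (a :: t.insertIdx j b) := fun j =>
        aux_des_cons_cons c a _
      have e3 : des (c :: a :: t) = (if a < c then 1 else 0) + des (a :: t) :=
        aux_des_cons_cons c a t
      simp only [e1, e2, pow_add, pow_succ]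
      rw [show (List.map (fun j => X ^ (if a < c then 1 else 0) * X ^ des (a :: t.insertIdx j b))
          (List.range (t.length + 1))).sum
        = X ^ (if a < c then 1 else 0) *
          ((List.map (fun j => (X : Polynomial ℝ) ^ des (a :: t.insertIdx j b))
            (List.range (t.length + 1))).sum) by
        rw [List.sum_map_mul_left]]
      rw [IH, e3]
      by_cases h : a < c <;> simp only [h, if_true, if_false] <;> push_cast <;> ring

lemma aux_mem_signings : ∀ (p : List ℤ), (∀ a ∈ p, 0 ≤ a) → ∀ v : List ℤ,
    (v ∈ signings p ↔ v.map (fun x => |x|) = p)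
  | [], _, v => by simp [signings, eq_comm]
  | a :: t, hp, v => by
    have ha : 0 ≤ a := hp a (by simp)
    have IH := aux_mem_signings t (fun x hx => hp x (by simp [hx]))
    simp only [signings, List.mem_flatMap, List.mem_cons, List.mem_singleton]
    constructor
    · rintro ⟨u, hu, rfl | rfl | h⟩
      · simp [abs_of_nonneg ha, (IH u).1 hu]
      · simp [abs_of_nonneg ha, (IH u).1 hu]
      · simp at h
    · intro h
      match v with
      | [] => simp at h
      | x :: u =>
        simp only [List.map_cons, List.cons.injEq] at h
        obtain ⟨hx, hu⟩ := h
        refine ⟨u, (IH u).2 hu, ?_⟩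
        rcases abs_cases x with ⟨h1, _⟩ | ⟨h1, _⟩
        · left; rw [← hx, ← h1, abs_abs]
        · right; left; rw [← hx]; simp [h1]

lemma aux_nodup_signings : ∀ (p : List ℤ), (∀ a ∈ p, 0 < a) → (signings p).Nodup
  | [], _ => by simp [signings]
  | a :: t, hp => by
    have ha : 0 < a := hp a (by simp)
    have IH := aux_nodup_signings t (fun x hx => hp x (by simp [hx]))
    rw [signings, List.nodup_flatMap]
    constructor
    · intro w _
      have : a ≠ -a := by omega
      simp [this]
    · refine IH.imp_of_mem ?_
      intro u v _ _ huv
      intro x hx hx'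
      simp only [List.mem_cons, List.mem_singleton] at hx hx'
      apply huv
      rcases hx with rfl | rfl | h
      · rcases hx' with h' | h' | h' <;> simp_all
      · rcases hx' with h' | h' | h' <;> simp_all
      · simp at h

lemma aux_mem_arrangements {l p : List ℤ} : p ∈ arrangements l ↔ p.Perm l := by
  simp [arrangements, List.mem_dedup, List.mem_permutations]

lemma aux_mem_signedWords {l : List ℤ} (hl : ∀ a ∈ l, 0 < a) {v : List ℤ} :
    v ∈ signedWords l ↔ (v.map (fun x => |x|)).Perm l := by
  simp only [signedWords, List.mem_flatMap, aux_mem_arrangements]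
  constructor
  · rintro ⟨p, hp, hv⟩
    have hpos : ∀ a ∈ p, 0 ≤ a := fun a hap => (hl a (hp.mem_iff.mp hap)).le
    rw [(aux_mem_signings p hpos v).1 hv]; exact hp
  · intro h
    refine ⟨v.map (fun x => |x|), h, ?_⟩
    exact (aux_mem_signings _ (fun a hap => (hl a (h.mem_iff.mp hap)).le) v).2 rfl

lemma aux_nodup_signedWords {l : List ℤ} (hl : ∀ a ∈ l, 0 < a) : (signedWords l).Nodup := by
  rw [signedWords, List.nodup_flatMap]
  constructor
  · intro p hp
    exact aux_nodup_signings p (fun a hap => hl a ((aux_mem_arrangements.1 hp).mem_iff.mp hap))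
  · refine (List.nodup_dedup _).imp_of_mem ?_
    intro p q hp hq hpq v hv hv'
    apply hpq
    have hp' : p.Perm l := aux_mem_arrangements.1 hp
    have hq' : q.Perm l := aux_mem_arrangements.1 hq
    have h1 := (aux_mem_signings p (fun a ha => (hl a (hp'.mem_iff.mp ha)).le) v).1 hv
    have h2 := (aux_mem_signings q (fun a ha => (hl a (hq'.mem_iff.mp ha)).le) v).1 hv'
    rw [← h1, ← h2]

lemma aux_indexOf_insertIdx {b : ℤ} : ∀ (l : List ℤ) (i : ℕ), b ∉ l → i ≤ l.length →
    (l.insertIdx i b).idxOf b = i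
  | l, 0, _, _ => by simp [List.insertIdx_zero]
  | [], i+1, _, h => by simp at h
  | a :: t, i+1, hb, h => by
    rw [List.insertIdx_succ_cons]
    have hab : b ≠ a := fun hh => hb (by simp [hh])
    rw [List.idxOf_cons_ne _ hab.symm, aux_indexOf_insertIdx t i (fun hh => hb (by simp [hh]))
      (Nat.le_of_succ_le_succ h)]

lemma aux_insertIdx_inj {b : ℤ} {w w' : List ℤ} {i j : ℕ} (hw : b ∉ w) (hw' : b ∉ w')
    (hi : i ≤ w.length) (hj : j ≤ w'.length)
    (h : w.insertIdx i b = w'.insertIdx j b) : i = j ∧ w = w' := by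
  have hij : i = j := by
    rw [← aux_indexOf_insertIdx w i hw hi, ← aux_indexOf_insertIdx w' j hw' hj, h]
  subst hij
  refine ⟨rfl, ?_⟩
  rw [← List.eraseIdx_insertIdx_self (i := i) (l := w) b, ← List.eraseIdx_insertIdx_self (i := i) (l := w') b, h]

lemma aux_map_abs_insertIdx (w : List ℤ) (i : ℕ) (b : ℤ) (h : i ≤ w.length) :
    (w.insertIdx i b).map (fun x => |x|) = (w.map (fun x => |x|)).insertIdx i |b| := by
  induction w generalizing i with
  | nil => have : i = 0 := Nat.le_zero.mp h; subst this; simp [List.insertIdx_zero]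
  | cons a t IH =>
    cases i with
    | zero => simp [List.insertIdx_zero]
    | succ j =>
      simp only [List.insertIdx_succ_cons, List.map_cons]
      rw [IH j (Nat.le_of_succ_le_succ h)]

lemma aux_mem_baseList {n : ℕ} {a : ℤ} (h : a ∈ baseList n) : 0 < a ∧ a ≤ n := by
  simp only [baseList, List.mem_flatMap, List.mem_range, List.mem_cons,
    List.mem_singleton] at h
  obtain ⟨i, hi, hh | hh | hh⟩ := h <;> first | (subst hh; simp at hi; omega) | simp at hh

lemma aux_length_baseList (n : ℕ) : (baseList n).length = 2 * n := by
  induction n with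
  | zero => simp [baseList]
  | succ m IH =>
    simp only [baseList, List.range_succ, List.flatMap_append] at *
    simp [IH]; omega

lemma aux_insertIdx_length_append (s t : List ℤ) (b : ℤ) :
    (s ++ t).insertIdx s.length b = s ++ b :: t := by
  induction s with
  | nil => simp [List.insertIdx_zero]
  | cons a u IH => simpa [List.insertIdx_succ_cons] using IH

lemma aux_sum_map_flatMap {α β : Type*} (l : List α) (f : α → List β) (g : β → Polynomial ℝ) :
    ((l.flatMap f).map g).sum = (l.map (fun x => ((f x).map g).sum)).sum := by
  induction l with
  | nil => simp
  | cons a t IH => simp [List.flatMap_cons, IH]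

lemma aux_sum_map_add {α : Type*} (l : List α) (f g : α → Polynomial ℝ) :
    (l.map (fun x => f x + g x)).sum = (l.map f).sum + (l.map g).sum := by
  induction l with
  | nil => simp
  | cons a t IH => simp [IH]; ring

lemma aux_perword (n k : ℕ) :
    ((k : Polynomial ℝ) + 1 + (((2 * n : ℕ) : Polynomial ℝ) - (k : Polynomial ℝ)) * X) * X ^ k
    = (1 + 2 * (n : Polynomial ℝ) * X) * X ^ k
      + X * (1 - X) * derivative ((X : Polynomial ℝ) ^ k) := by
  cases k with
  | zero => simp
  | succ j =>
    rw [derivative_X_pow, map_natCast]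
    simp only [Nat.add_sub_cancel]
    push_cast
    ring

end Aux

/-- Tₙ(x) = (1 + 2nx) Sₙ(x) + x(1-x) Sₙ'(x). -/
theorem stmt11 (n : ℕ) (hn : 1 ≤ n) :
    TpolyB n = (1 + 2 * (n : Polynomial ℝ) * X) * SpolyB n
      + X * (1 - X) * derivative (SpolyB n) := by
  classical
  set b : ℤ := (n : ℤ) + 1 with hb
  have hb_pos : (0 : ℤ) < b := by positivity
  have habs_b : |b| = b := abs_of_pos hb_pos
  have hpos : ∀ a ∈ baseList n, 0 < a := fun a ha => (aux_mem_baseList ha).1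
  have hposb : ∀ a ∈ baseList n ++ [b], 0 < a := by
    intro a ha
    rcases List.mem_append.1 ha with h | h
    · exact hpos a h
    · simp only [List.mem_singleton] at h; omega
  set S := signedWords (baseList n) with hS
  have hlt : ∀ w ∈ S, ∀ x ∈ w, x < b := by
    intro w hw x hx
    have := (aux_mem_signedWords hpos).1 hw
    have hmem : |x| ∈ baseList n := this.mem_iff.mp (List.mem_map_of_mem (f := fun x => |x|) hx)
    have := (aux_mem_baseList hmem).2
    have := le_abs_self x
    omega
  have hnotb : ∀ w ∈ S, b ∉ w := fun w hw hbw => absurd (hlt w hw b hbw) (lt_irrefl b)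
  have hlen : ∀ w ∈ S, w.length = 2 * n := by
    intro w hw
    have := ((aux_mem_signedWords hpos).1 hw).length_eq
    simpa [aux_length_baseList] using this
  set L := S.flatMap
      (fun w => (List.range (w.length + 1)).map (fun i => w.insertIdx i b)) with hLdef
  -- Dwords n is a permutation of L
  have hnodupL : L.Nodup := by
    rw [hLdef, List.nodup_flatMap]
    constructor
    · intro w hw
      refine List.Nodup.map_on ?_ List.nodup_range
      intro i hi j hj hij
      rw [List.mem_range] at hi hj
      exact (aux_insertIdx_inj (hnotb w hw) (hnotb w hw)
        (Nat.lt_succ_iff.mp hi) (Nat.lt_succ_iff.mp hj) hij).1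
    · refine (aux_nodup_signedWords hpos).imp_of_mem ?_
      intro w w' hw hw' hne v hv hv'
      simp only [List.mem_map, List.mem_range] at hv hv'
      obtain ⟨i, hi, rfl⟩ := hv
      obtain ⟨j, hj, hij⟩ := hv'
      exact hne ((aux_insertIdx_inj (hnotb w hw) (hnotb w' hw')
        (Nat.lt_succ_iff.mp hi) (Nat.lt_succ_iff.mp hj) hij.symm).2)
  have hnodupD : (Dwords n).Nodup := (aux_nodup_signedWords hposb).filter _
  have hmemD : ∀ v : List ℤ, v ∈ Dwords n ↔
      ((v.map (fun x => |x|)).Perm (baseList n ++ [b]) ∧ b ∈ v) := by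
    intro v
    rw [Dwords, List.mem_filter]
    simp only [decide_eq_true_eq, ← hb]
    rw [aux_mem_signedWords hposb]
  have hperm : (Dwords n).Perm L := by
    rw [List.perm_ext_iff_of_nodup hnodupD hnodupL]
    intro v
    rw [hmemD]
    constructor
    · rintro ⟨hpv, hbv⟩
      obtain ⟨s, t, rfl⟩ := List.append_of_mem hbv
      refine List.mem_flatMap.2 ⟨s ++ t, ?_, ?_⟩
      · rw [hS, aux_mem_signedWords hpos]
        have h1 : ((s ++ b :: t).map (fun x => |x|))
            = s.map (fun x => |x|) ++ b :: t.map (fun x => |x|) := by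
          simp [habs_b]
        have h2 : (b :: (s ++ t).map (fun x => |x|)).Perm (b :: baseList n) := by
          calc b :: (s ++ t).map (fun x => |x|)
              = b :: (s.map (fun x => |x|) ++ t.map (fun x => |x|)) := by simp
            _ ~ s.map (fun x => |x|) ++ b :: t.map (fun x => |x|) := List.perm_middle.symm
            _ = (s ++ b :: t).map (fun x => |x|) := h1.symm
            _ ~ baseList n ++ [b] := hpv
            _ ~ b :: baseList n := List.perm_append_singleton _ _
        exact h2.cons_inv
      · refine List.mem_map.2 ⟨s.length, ?_, ?_⟩
        · rw [List.mem_range]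
          have : s.length ≤ (s ++ t).length := by simp
          omega
        · exact aux_insertIdx_length_append s t b
    · intro hv
      obtain ⟨w, hw, hv⟩ := List.mem_flatMap.1 hv
      simp only [List.mem_map, List.mem_range] at hv
      obtain ⟨i, hi, rfl⟩ := hv
      have hi' : i ≤ w.length := Nat.lt_succ_iff.mp hi
      constructor
      · have h1 : ((w.insertIdx i b).map (fun x => |x|))
            = (w.map (fun x => |x|)).insertIdx i b := by
          rw [aux_map_abs_insertIdx w i b hi', habs_b]
        rw [h1]
        calc (w.map (fun x => |x|)).insertIdx i b
            ~ b :: w.map (fun x => |x|) := List.perm_insertIdx b _ (by simpa using hi')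
          _ ~ b :: baseList n := ((aux_mem_signedWords hpos).1 hw).cons b
          _ ~ baseList n ++ [b] := (List.perm_append_singleton _ _).symm
      · exact (List.mem_insertIdx hi').2 (Or.inl rfl)
  -- Now compute
  have hinner : ∀ w ∈ S,
      ((((List.range (w.length + 1)).map (fun i => w.insertIdx i b)).map
        (fun v => (X : Polynomial ℝ) ^ desB v)).sum)
      = (1 + 2 * (n : Polynomial ℝ) * X) * X ^ desB w
          + X * (1 - X) * derivative ((X : Polynomial ℝ) ^ desB w) := by
    intro w hw
    rw [List.map_map]
    have key := aux_insSum b w 0 hb_pos (hlt w hw)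
    simp only [Function.comp_def, desB]
    rw [key, hlen w hw]
    have : des ((0:ℤ) :: w) = desB w := rfl
    rw [this]
    exact aux_perword n (desB w)
  have hT : TpolyB n = (S.map (fun w =>
      (1 + 2 * (n : Polynomial ℝ) * X) * X ^ desB w
        + X * (1 - X) * derivative ((X : Polynomial ℝ) ^ desB w))).sum := by
    rw [TpolyB, (hperm.map (fun w => (X : Polynomial ℝ) ^ desB w)).sum_eq, hLdef,
      aux_sum_map_flatMap, List.map_congr_left hinner]
  rw [hT, aux_sum_map_add]
  have hder : derivative (SpolyB n)
      = (S.map (fun w => derivative ((X : Polynomial ℝ) ^ desB w))).sum := by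
    rw [SpolyB, ← hS, map_list_sum, List.map_map]
    rfl
  rw [hder, List.sum_map_mul_left, List.sum_map_mul_left, SpolyB, ← hS]
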